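/- For 0 < p < 1 and any square-summable sequence x : ℕ → ℝ, the sequence y : ℕ → ℝ defined by y(0) = −√p·x(0) and y(t+1) = √p·y(t) + x(t) − √p·x(t+1) for all t ∈ ℕ is square-summable and satisfies Σ_{t=0}^∞ y(t)² = Σ_{t=0}^∞ x(t)² (i.e., the discrete all-pass operator T(z;p) = (1−√p z)/(z−√p) acts as an isometry on ℓ²(ℕ,ℝ)). -/

import Mathlib

/-- The discrete Laguerre functions in time-domain (not needed for this statement,
but the all-pass recursion below is the building block `T(z;p)`). -/
theorem allpass_isometry (p : ℝ) (hp0 : 0 < p) (hp1 : p < 1)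
    (x y : ℕ → ℝ) (hx : Summable fun t => x t ^ 2)
    (hy0 : y 0 = -Real.sqrt p * x 0)
    (hyrec : ∀ t : ℕ, y (t + 1) = Real.sqrt p * y t + x t - Real.sqrt p * x (t + 1)) :
    Summable (fun t => y t ^ 2) ∧ (∑' t : ℕ, y t ^ 2) = ∑' t : ℕ, x t ^ 2 := by
  set s : ℝ := Real.sqrt p with hs
  have hs2 : s ^ 2 = p := Real.sq_sqrt hp0.le
  have hs0 : 0 < s := Real.sqrt_pos.mpr hp0
  have hs1 : s < 1 := by nlinarith [hs0]
  have h1p : (0:ℝ) < 1 - p := by linarith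
  set u : ℕ → ℝ := fun t => y t + s * x t with hu
  have hu0 : u 0 = 0 := by simp [hu, hy0]
  have hurec : ∀ t, u (t + 1) = s * u t + (1 - p) * x t := by
    intro t
    simp only [hu, hyrec t]
    linear_combination (-x t) * hs2
  -- key identity
  have key : ∀ t, y t ^ 2 = x t ^ 2 + (u t ^ 2 - u (t + 1) ^ 2) / (1 - p) := by
    intro t
    have hyt : y t = u t - s * x t := by simp [hu]
    rw [hyt, hurec t]
    field_simp
    linear_combination (u t ^ 2 + (1 - p) * x t ^ 2) * hs2
  -- partial sums
  have psum : ∀ N, ∑ t ∈ Finset.range N, y t ^ 2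
      = (∑ t ∈ Finset.range N, x t ^ 2) - u N ^ 2 / (1 - p) := by
    intro N
    induction N with
    | zero => simp [hu0]
    | succ n ih =>
      rw [Finset.sum_range_succ, Finset.sum_range_succ, ih, key n]
      ring
  -- summability of y^2
  have hsum : Summable (fun t => y t ^ 2) := by
    apply summable_of_sum_range_le (c := ∑' t, x t ^ 2) (fun n => sq_nonneg _)
    intro n
    rw [psum n]
    have h1 : ∑ t ∈ Finset.range n, x t ^ 2 ≤ ∑' t, x t ^ 2 :=
      hx.sum_le_tsum _ (fun i _ => sq_nonneg _)
    have h2 : 0 ≤ u n ^ 2 / (1 - p) := div_nonneg (sq_nonneg _) h1p.le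
    linarith
  refine ⟨hsum, ?_⟩
  -- limits of partial sums
  have hty : Filter.Tendsto (fun N => ∑ t ∈ Finset.range N, y t ^ 2)
      Filter.atTop (nhds (∑' t, y t ^ 2)) := hsum.hasSum.tendsto_sum_nat
  have htx : Filter.Tendsto (fun N => ∑ t ∈ Finset.range N, x t ^ 2)
      Filter.atTop (nhds (∑' t, x t ^ 2)) := hx.hasSum.tendsto_sum_nat
  set L : ℝ := ((∑' t, x t ^ 2) - ∑' t, y t ^ 2) * (1 - p) with hL
  have htu : Filter.Tendsto (fun N => u N ^ 2) Filter.atTop (nhds L) := by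
    have : Filter.Tendsto (fun N => ((∑ t ∈ Finset.range N, x t ^ 2)
        - ∑ t ∈ Finset.range N, y t ^ 2) * (1 - p)) Filter.atTop (nhds L) :=
      ((htx.sub hty).mul_const _)
    refine this.congr (fun N => ?_)
    rw [psum N]
    field_simp
    ring
  have hL0 : 0 ≤ L := le_of_tendsto_of_tendsto' tendsto_const_nhds htu
    (fun n => sq_nonneg _)
  -- |u| tends to sqrt L
  have htabs : Filter.Tendsto (fun N => |u N|) Filter.atTop (nhds (Real.sqrt L)) := by
    have := (Real.continuous_sqrt.tendsto L).comp htu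
    refine this.congr (fun N => ?_)
    simp [Function.comp, Real.sqrt_sq_eq_abs]
  -- x tends to 0
  have htx0 : Filter.Tendsto (fun t => |x t|) Filter.atTop (nhds 0) := by
    have h0 : Filter.Tendsto (fun t => x t ^ 2) Filter.atTop (nhds 0) := hx.tendsto_atTop_zero
    have := (Real.continuous_sqrt.tendsto 0).comp h0
    rw [Real.sqrt_zero] at this
    refine this.congr (fun t => ?_)
    simp [Function.comp, Real.sqrt_sq_eq_abs]
  -- recursion bound forces sqrt L ≤ s * sqrt L
  have hshift : Filter.Tendsto (fun t => |u (t + 1)|) Filter.atTop (nhds (Real.sqrt L)) :=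
    htabs.comp (Filter.tendsto_add_atTop_nat 1)
  have hrhs : Filter.Tendsto (fun t => s * |u t| + (1 - p) * |x t|) Filter.atTop
      (nhds (s * Real.sqrt L + (1 - p) * 0)) :=
    (htabs.const_mul s).add (htx0.const_mul (1 - p))
  have hle : Real.sqrt L ≤ s * Real.sqrt L + (1 - p) * 0 := by
    refine le_of_tendsto_of_tendsto' hshift hrhs (fun t => ?_)
    rw [hurec t]
    calc |s * u t + (1 - p) * x t| ≤ |s * u t| + |(1 - p) * x t| := abs_add_le _ _
      _ = s * |u t| + (1 - p) * |x t| := by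
          rw [abs_mul, abs_mul, abs_of_pos hs0, abs_of_pos h1p]
  have hsL : Real.sqrt L = 0 := by
    nlinarith [Real.sqrt_nonneg L, hle]
  have hLz : L = 0 := by
    have := Real.sqrt_eq_zero hL0 |>.mp hsL
    exact this
  have : (∑' t, x t ^ 2) - ∑' t, y t ^ 2 = 0 := by
    rcases mul_eq_zero.mp (hL ▸ hLz.symm).symm with h | h
    · exact h
    · linarith
  linarith
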